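/- Let p, q > 0 be real numbers, let a₁ ≤ a < b ≤ b₁ be real numbers, and set A = (pa+qb)/(p+q). Let g : [a,b] → ℝ be integrable, nonnegative, and symmetric about A (i.e. g(x) = g(2A−x) whenever both points lie in [a,b]), and let f : [a₁,b₁] → ℝ be continuous and convex. If 0 < y ≤ ((b−a)/(p+q))·min{p,q}, then f((pa+qb)/(p+q))·∫_{A−y}^{A+y} g(t) dt ≤ ∫_{A−y}^{A+y} f(x)g(x) dx ≤ ((p·f(a)+q·f(b))/(p+q))·∫_{A−y}^{A+y} g(t) dt. -/

import Mathlib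

open MeasureTheory intervalIntegral

/-- Proposition (weighted Vasić–Lacković / Lupaş statement, the "if" direction):
with `p, q > 0`, `a₁ ≤ a < b ≤ b₁`, `A = (pa+qb)/(p+q)`, `g : [a,b] → ℝ₊` integrable and
symmetric about `A`, `f : [a₁,b₁] → ℝ` continuous and convex, and
`0 < y ≤ ((b−a)/(p+q))·min{p,q}`, then
`f(A)·∫_{A−y}^{A+y} g ≤ ∫_{A−y}^{A+y} f·g ≤ ((p·f(a)+q·f(b))/(p+q))·∫_{A−y}^{A+y} g`. -/
theorem fejer_stmt_14 (p q a₁ a b b₁ A y : ℝ) (f g : ℝ → ℝ)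
    (hp : 0 < p) (hq : 0 < q)
    (ha₁ : a₁ ≤ a) (hab : a < b) (hb₁ : b ≤ b₁)
    (hA : A = (p * a + q * b) / (p + q))
    (hg : IntervalIntegrable g volume a b)
    (hg0 : ∀ x ∈ Set.Icc a b, 0 ≤ g x)
    (hgsymm : ∀ x, x ∈ Set.Icc a b → 2 * A - x ∈ Set.Icc a b → g x = g (2 * A - x))
    (hf_cont : ContinuousOn f (Set.Icc a₁ b₁))
    (hf_conv : ConvexOn ℝ (Set.Icc a₁ b₁) f)
    (hy0 : 0 < y) (hy : y ≤ (b - a) / (p + q) * min p q) :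
    f ((p * a + q * b) / (p + q)) * (∫ t in (A - y)..(A + y), g t)
        ≤ (∫ x in (A - y)..(A + y), f x * g x) ∧
    (∫ x in (A - y)..(A + y), f x * g x)
        ≤ (p * f a + q * f b) / (p + q) * (∫ t in (A - y)..(A + y), g t) := by
  have hpq : (0:ℝ) < p + q := by linarith
  have hba : (0:ℝ) < b - a := by linarith
  -- bounds on y
  have hyq : y * (p + q) ≤ (b - a) * q := by
    have h1 : y ≤ (b - a) / (p + q) * q :=
      hy.trans (mul_le_mul_of_nonneg_left (min_le_right p q) (by positivity))
    rw [div_mul_eq_mul_div, le_div_iff₀ hpq] at h1; linarith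
  have hyp : y * (p + q) ≤ (b - a) * p := by
    have h1 : y ≤ (b - a) / (p + q) * p :=
      hy.trans (mul_le_mul_of_nonneg_left (min_le_left p q) (by positivity))
    rw [div_mul_eq_mul_div, le_div_iff₀ hpq] at h1; linarith
  have haAy : a ≤ A - y := by
    rw [hA, le_sub_iff_add_le, ← sub_nonneg]
    rw [← sub_nonneg] at hyq
    have : (p * a + q * b) / (p + q) - (a + y) = ((b - a) * q - y * (p + q)) / (p + q) := by
      field_simp; ring
    rw [this]; positivity
  have hAyb : A + y ≤ b := by
    rw [hA, ← le_sub_iff_add_le, ← sub_nonneg]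
    rw [← sub_nonneg] at hyp
    have : b - y - (p * a + q * b) / (p + q) = ((b - a) * p - y * (p + q)) / (p + q) := by
      field_simp; ring
    rw [this]; positivity
  have hAmem : a ≤ A := by linarith
  have hAb : A ≤ b := by linarith
  have hsub : Set.Icc a b ⊆ Set.Icc a₁ b₁ := Set.Icc_subset_Icc ha₁ hb₁
  have hmemu : ∀ u ∈ Set.Icc A (A + y), u ∈ Set.Icc a b := by
    intro u hu; exact ⟨by linarith [hu.1], by linarith [hu.2]⟩
  have hmemv : ∀ u ∈ Set.Icc A (A + y), 2 * A - u ∈ Set.Icc a b := by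
    intro u hu; exact ⟨by linarith [hu.2], by linarith [hu.1]⟩
  -- chord bound from convexity
  have haM : a ∈ Set.Icc a₁ b₁ := ⟨le_refl a₁ |>.trans ha₁, by linarith⟩
  have hbM : b ∈ Set.Icc a₁ b₁ := ⟨by linarith, hb₁⟩
  have chord : ∀ x ∈ Set.Icc a b, f x ≤ ((b - x) * f a + (x - a) * f b) / (b - a) := by
    intro x hx
    have h := hf_conv.2 haM hbM (show (0:ℝ) ≤ (b - x)/(b - a) by
        apply div_nonneg (by linarith [hx.2]) hba.le)
      (show (0:ℝ) ≤ (x - a)/(b - a) by apply div_nonneg (by linarith [hx.1]) hba.le)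
      (by field_simp; ring)
    simp only [smul_eq_mul] at h
    have hpt : (b - x)/(b - a) * a + (x - a)/(b - a) * b = x := by
      field_simp; ring
    rw [hpt] at h
    calc f x ≤ (b - x)/(b - a) * f a + (x - a)/(b - a) * f b := h
      _ = ((b - x) * f a + (x - a) * f b) / (b - a) := by ring
  -- pointwise bounds on [A, A+y]
  have lowerpt : ∀ u ∈ Set.Icc A (A + y), 2 * f A ≤ f u + f (2 * A - u) := by
    intro u hu
    have hu1 := hsub (hmemu u hu)
    have hv1 := hsub (hmemv u hu)
    have h := hf_conv.2 hu1 hv1 (by norm_num : (0:ℝ) ≤ 1/2) (by norm_num : (0:ℝ) ≤ 1/2)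
      (by norm_num)
    simp only [smul_eq_mul] at h
    have hpt : (1/2 : ℝ) * u + (1/2 : ℝ) * (2 * A - u) = A := by ring
    rw [hpt] at h; linarith
  have upperpt : ∀ u ∈ Set.Icc A (A + y),
      f u + f (2 * A - u) ≤ 2 * ((p * f a + q * f b) / (p + q)) := by
    intro u hu
    have h1 := chord u (hmemu u hu)
    have h2 := chord (2 * A - u) (hmemv u hu)
    have E : ((b - u) * f a + (u - a) * f b) / (b - a)
        + ((b - (2 * A - u)) * f a + ((2 * A - u) - a) * f b) / (b - a)
        = 2 * ((p * f a + q * f b) / (p + q)) := by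
      rw [hA]; field_simp; ring
    linarith
  -- integrability
  have huIcc : Set.uIcc (A - y) (A + y) ⊆ Set.uIcc a b := by
    rw [Set.uIcc_of_le (by linarith : A - y ≤ A + y), Set.uIcc_of_le hab.le]
    exact Set.Icc_subset_Icc haAy hAyb
  have hgR : IntervalIntegrable g volume A (A + y) := hg.mono_set (by
    refine Set.uIcc_subset_uIcc ?_ ?_ <;> rw [Set.uIcc_of_le hab.le]
    · exact ⟨hAmem, hAb⟩
    · exact ⟨by linarith, hAyb⟩)
  have hgL : IntervalIntegrable g volume (A - y) A := hg.mono_set (by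
    refine Set.uIcc_subset_uIcc ?_ ?_ <;> rw [Set.uIcc_of_le hab.le]
    · exact ⟨haAy, by linarith⟩
    · exact ⟨hAmem, hAb⟩)
  have hfc1 : ContinuousOn f (Set.uIcc A (A + y)) := by
    apply hf_cont.mono
    rw [Set.uIcc_of_le (by linarith : A ≤ A + y)]
    exact fun u hu => hsub (hmemu u hu)
  have hfc2 : ContinuousOn (fun u => f (2 * A - u)) (Set.uIcc A (A + y)) := by
    apply ContinuousOn.comp hf_cont (by fun_prop)
    rw [Set.uIcc_of_le (by linarith : A ≤ A + y)]
    exact fun u hu => hsub (hmemv u hu)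
  have hi1 : IntervalIntegrable (fun u => f u * g u) volume A (A + y) :=
    hgR.continuousOn_mul hfc1
  have hi2 : IntervalIntegrable (fun u => f (2 * A - u) * g u) volume A (A + y) :=
    hgR.continuousOn_mul hfc2
  have hi3 : IntervalIntegrable (fun u => (f u + f (2 * A - u)) * g u) volume A (A + y) :=
    hgR.continuousOn_mul (hfc1.add hfc2)
  have hiL : IntervalIntegrable (fun u => f u * g u) volume (A - y) A :=
    hgL.continuousOn_mul (hf_cont.mono (by
      rw [Set.uIcc_of_le (by linarith : A - y ≤ A)]
      intro u hu
      exact hsub ⟨by linarith [hu.1], by linarith [hu.2, hAb]⟩))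
  -- symmetry identities
  have gsym : ∀ u ∈ Set.uIcc A (A + y), g u = g (2 * A - u) := by
    rw [Set.uIcc_of_le (by linarith : A ≤ A + y)]
    intro u hu; exact hgsymm u (hmemu u hu) (hmemv u hu)
  have keyL : (∫ x in (A - y)..A, f x * g x)
      = ∫ u in A..(A + y), f (2 * A - u) * g u := by
    have e1 : (∫ u in A..(A + y), f (2 * A - u) * g u)
        = ∫ u in A..(A + y), f (2 * A - u) * g (2 * A - u) := by
      apply integral_congr
      intro u hu; simp only []
      rw [gsym u hu]
    rw [e1]
    have e2 := integral_comp_sub_left (fun x => f x * g x) (2 * A) (a := A) (b := A + y)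
    rw [e2]
    congr 1 <;> ring
  have keyLg : (∫ x in (A - y)..A, g x) = ∫ u in A..(A + y), g u := by
    have e1 : (∫ u in A..(A + y), g u) = ∫ u in A..(A + y), g (2 * A - u) := by
      apply integral_congr; intro u hu; exact gsym u hu
    rw [e1]
    have e2 := integral_comp_sub_left g (2 * A) (a := A) (b := A + y)
    rw [e2]
    congr 1 <;> ring
  have key : (∫ x in (A - y)..(A + y), f x * g x)
      = ∫ u in A..(A + y), (f u + f (2 * A - u)) * g u := by
    rw [← integral_add_adjacent_intervals hiL hi1, keyL]
    rw [← integral_add hi2 hi1]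
    apply integral_congr; intro u _; simp only []; ring
  have keyg : (∫ t in (A - y)..(A + y), g t) = 2 * ∫ u in A..(A + y), g u := by
    rw [← integral_add_adjacent_intervals hgL hgR, keyLg]; ring
  have hgnn : ∀ u ∈ Set.Icc A (A + y), (0:ℝ) ≤ g u := fun u hu => hg0 u (hmemu u hu)
  constructor
  · rw [← hA, key, keyg, show f A * (2 * ∫ u in A..(A + y), g u)
        = ∫ u in A..(A + y), (2 * f A) * g u by rw [intervalIntegral.integral_const_mul]; ring]
    apply integral_mono_on (by linarith) (hgR.const_mul _) hi3
    intro u hu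
    exact mul_le_mul_of_nonneg_right (lowerpt u hu) (hgnn u hu)
  · rw [key, keyg, show (p * f a + q * f b) / (p + q) * (2 * ∫ u in A..(A + y), g u)
        = ∫ u in A..(A + y), (2 * ((p * f a + q * f b) / (p + q))) * g u by
          rw [intervalIntegral.integral_const_mul]; ring]
    apply integral_mono_on (by linarith) hi3 (hgR.const_mul _)
    intro u hu
    exact mul_le_mul_of_nonneg_right (upperpt u hu) (hgnn u hu)
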